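/- Let 𝔍 be a set of channels on d×d matrices such that every M ∈ 𝔍 maps incoherent states to incoherent states, and such that for every incoherent state σ the replacement channel τ ↦ Tr(τ)σ belongs to 𝔍 (this holds for each of SIO, IO, DIO and MIO). Then for every channel N and every probe state ρ, the advantage of ρ over incoherent probe states is bounded by its trace-norm coherence: p_succ(N, 𝔍, ρ) − p_succ(N, 𝔍, ℐ) ≤ (1/2)·C₁(ρ). -/

import Mathlib

open scoped Kronecker ComplexOrder

variable {ι : Type*} [Fintype ι] [DecidableEq ι]

/-- A quantum state: positive semidefinite matrix of trace one. -/
def IsState (ρ : Matrix ι ι ℂ) : Prop := ρ.PosSemidef ∧ ρ.trace = 1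

/-- The action of `id_n ⊗ N` on block matrices. -/
def idTensorMap (n : ℕ) (N : Matrix ι ι ℂ →ₗ[ℂ] Matrix ι ι ℂ)
    (M : Matrix (Fin n × ι) (Fin n × ι) ℂ) : Matrix (Fin n × ι) (Fin n × ι) ℂ :=
  Matrix.of fun p q => N (Matrix.of fun k l => M (p.1, k) (q.1, l)) p.2 q.2

/-- A quantum channel: completely positive trace preserving linear map. -/
structure Channel (ι : Type*) [Fintype ι] [DecidableEq ι] where
  map : Matrix ι ι ℂ →ₗ[ℂ] Matrix ι ι ℂ
  cp : ∀ (n : ℕ) (M : Matrix (Fin n × ι) (Fin n × ι) ℂ), M.PosSemidef →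
        (idTensorMap n map M).PosSemidef
  tp : ∀ A : Matrix ι ι ℂ, (map A).trace = A.trace

/-- The trace norm ‖A‖₁ = Tr √(AᴴA). -/
noncomputable def traceNorm (A : Matrix ι ι ℂ) : ℝ :=
  ((Matrix.posSemidef_conjTranspose_mul_self A).1.eigenvectorUnitary.1 *
    Matrix.diagonal (((↑) : ℝ → ℂ) ∘ (√·) ∘ (Matrix.posSemidef_conjTranspose_mul_self A).1.eigenvalues) *
    (star (Matrix.posSemidef_conjTranspose_mul_self A).1.eigenvectorUnitary : Matrix ι ι ℂ)).trace.re

/-- Trace-norm resource measure ω₁. -/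
noncomputable def omega1 (F : Set (Matrix ι ι ℂ)) (ρ : Matrix ι ι ℂ) : ℝ :=
  (1/2) * sInf ((fun σ => traceNorm (ρ - σ)) '' F)

/-- Trace-norm resource generating power Ω₁. -/
noncomputable def genPower1 (F : Set (Matrix ι ι ℂ)) (N : Matrix ι ι ℂ → Matrix ι ι ℂ) : ℝ :=
  sSup ((fun ρ => omega1 F (N ρ)) '' F)

/-- Trace-norm resource increasing power Ω̃₁. -/
noncomputable def incPower1 (F : Set (Matrix ι ι ℂ)) (N : Matrix ι ι ℂ → Matrix ι ι ℂ) : ℝ :=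
  sSup ((fun ρ => omega1 F (N ρ) - omega1 F ρ) '' {ρ | IsState ρ})

/-- Holevo–Helstrom success probability of discriminating two channels with probe `ρ`. -/
noncomputable def psuccPair (N M : Matrix ι ι ℂ → Matrix ι ι ℂ) (ρ : Matrix ι ι ℂ) : ℝ :=
  1/2 + (1/4) * traceNorm (N ρ - M ρ)

/-- Success probability of discriminating `N` from the set of channels `Free` with probe `ρ`. -/
noncomputable def psuccChan (N : Matrix ι ι ℂ → Matrix ι ι ℂ) (Free : Set (Channel ι))
    (ρ : Matrix ι ι ℂ) : ℝ :=
  sInf ((fun M : Channel ι => psuccPair N (⇑M.map) ρ) '' Free)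

/-- Maximum success probability of discriminating `N` from `Free` using probes from `F`. -/
noncomputable def psuccFF (N : Matrix ι ι ℂ → Matrix ι ι ℂ) (Free : Set (Channel ι))
    (F : Set (Matrix ι ι ℂ)) : ℝ :=
  sSup ((fun ρ => psuccChan N Free ρ) '' F)

/-- The set of incoherent states: states diagonal in the fixed (standard) basis. -/
def incoherentStates (d : ℕ) : Set (Matrix (Fin d) (Fin d) ℂ) :=
  {ρ | IsState ρ ∧ ρ.IsDiag}

open scoped MatrixOrder

lemma traceNorm_def' (A : Matrix ι ι ℂ) :
    traceNorm A = (CFC.sqrt (A.conjTranspose * A)).trace.re := by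
  have h := Matrix.posSemidef_conjTranspose_mul_self A
  rw [CFC.sqrt_eq_cfc, cfc_nnreal_eq_real _ _ h.nonneg, h.1.cfc_eq, traceNorm]
  simp only [Matrix.IsHermitian.cfc, Unitary.conjStarAlgAut_apply]
  congr 4
  funext i j
  simp [Matrix.diagonal_apply, max_eq_left (h.eigenvalues_nonneg i)]

open Matrix in
lemma traceNorm_eq_sum_abs (X : Matrix ι ι ℂ) (hX : X.IsHermitian) :
    traceNorm X = ∑ i, |hX.eigenvalues i| := by
  set U : Matrix ι ι ℂ := (hX.eigenvectorUnitary : Matrix ι ι ℂ)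
  have hU : (star U) * U = 1 := Unitary.coe_star_mul_self hX.eigenvectorUnitary
  have hU' : U * (star U) = 1 := Unitary.coe_mul_star_self hX.eigenvectorUnitary
  set D : Matrix ι ι ℂ := diagonal (Complex.ofReal ∘ hX.eigenvalues)
  have hspec : X = U * D * star U := hX.spectral_theorem
  set S : Matrix ι ι ℂ := U * diagonal (fun i => Complex.ofReal |hX.eigenvalues i|) * star U
  have hSpsd : S.PosSemidef := by
    have : PosSemidef (diagonal (fun i => Complex.ofReal |hX.eigenvalues i|)) := by
      refine PosSemidef.diagonal fun i => ?_
      simp [Complex.nonneg_iff, abs_nonneg]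
    show PosSemidef (U * _ * star U)
    rw [Matrix.star_eq_conjTranspose]
    exact this.mul_mul_conjTranspose_same U
  have hsq : S ^ 2 = Xᴴ * X := by
    rw [hX.eq]
    rw [hspec]
    simp only [S, pow_two]
    calc (U * diagonal (fun i => Complex.ofReal |hX.eigenvalues i|) * star U) *
          (U * diagonal (fun i => Complex.ofReal |hX.eigenvalues i|) * star U)
        = U * (diagonal (fun i => Complex.ofReal |hX.eigenvalues i|) *
            diagonal (fun i => Complex.ofReal |hX.eigenvalues i|)) * star U := by
          rw [show ∀ (A B : Matrix ι ι ℂ),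
            (U * A * star U) * (U * B * star U) = U * (A * ((star U * U) * B)) * star U by
              intros; noncomm_ring]
          rw [hU, one_mul]
      _ = U * (D * D) * star U := by
          rw [diagonal_mul_diagonal, diagonal_mul_diagonal]
          congr 1
          congr 1
          congr 1
          funext i
          simp [D, ← Complex.ofReal_mul, abs_mul_abs_self, abs_mul_abs_self]
      _ = (U * D * star U) * (U * D * star U) := by
          rw [show ∀ (A B : Matrix ι ι ℂ),
            (U * A * star U) * (U * B * star U) = U * (A * ((star U * U) * B)) * star U by
              intros; noncomm_ring]
          rw [hU, one_mul]
  have hS : S = CFC.sqrt (Xᴴ * X) :=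
    (CFC.sqrt_unique (by rw [← sq]; exact hsq) hSpsd.nonneg).symm
  rw [traceNorm_def', ← hS]
  have : S.trace = ∑ i, Complex.ofReal |hX.eigenvalues i| := by
    rw [show S.trace = (star U * (U * diagonal (fun i => Complex.ofReal |hX.eigenvalues i|))).trace by
      rw [Matrix.trace_mul_comm]]
    rw [← mul_assoc, hU, one_mul, Matrix.trace_diagonal]
  rw [this]
  simp

open Matrix in
lemma traceNorm_psd {P : Matrix ι ι ℂ} (hP : P.PosSemidef) : traceNorm P = P.trace.re := by
  rw [traceNorm_def', CFC.sqrt_unique (a := Pᴴ * P) (b := P) (by rw [hP.1.eq]) hP.nonneg]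

open Matrix in
lemma diag_nonneg' {P : Matrix ι ι ℂ} (hP : P.PosSemidef) (i : ι) : 0 ≤ P i i := by
  exact hP.diag_nonneg

open Matrix in
lemma traceNorm_congr {A B : Matrix ι ι ℂ} (h : Aᴴ*A = Bᴴ*B) : traceNorm A = traceNorm B := by
  rw [traceNorm_def', traceNorm_def', h]

open Matrix in
lemma pairing_le (X W : Matrix ι ι ℂ) (hX : X.IsHermitian)
    (hW1 : (1 - W).PosSemidef) (hW2 : (1 + W).PosSemidef) :
    (W * X).trace.re ≤ traceNorm X := by
  rw [traceNorm_eq_sum_abs X hX]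
  set U : Matrix ι ι ℂ := (hX.eigenvectorUnitary : Matrix ι ι ℂ)
  have hU : (star U) * U = 1 := Unitary.coe_star_mul_self hX.eigenvectorUnitary
  set D : Matrix ι ι ℂ := diagonal (Complex.ofReal ∘ hX.eigenvalues)
  have hspec : X = U * D * star U := hX.spectral_theorem
  set C : Matrix ι ι ℂ := star U * W * U with hC
  have h1 : (1 - C).PosSemidef := by
    have := hW1.conjTranspose_mul_mul_same U
    have e : Uᴴ * (1 - W) * U = 1 - C := by
      rw [hC, ← Matrix.star_eq_conjTranspose, mul_sub, mul_one, sub_mul, hU]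
    rwa [e] at this
  have h2 : (1 + C).PosSemidef := by
    have := hW2.conjTranspose_mul_mul_same U
    have e : Uᴴ * (1 + W) * U = 1 + C := by
      rw [hC, ← Matrix.star_eq_conjTranspose, mul_add, mul_one, add_mul, hU]
    rwa [e] at this
  have hCd : ∀ i, |(C i i).re| ≤ 1 := by
    intro i
    have a1 := (Complex.nonneg_iff.mp (diag_nonneg' h1 i)).1
    have a2 := (Complex.nonneg_iff.mp (diag_nonneg' h2 i)).1
    simp only [Matrix.sub_apply, Matrix.add_apply, Matrix.one_apply_eq, Complex.sub_re,
      Complex.add_re, Complex.one_re] at a1 a2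
    rw [abs_le]; constructor <;> linarith
  have htr : (W * X).trace = ∑ i, C i i * D i i := by
    have hU' : U * (star U) = 1 := Unitary.coe_mul_star_self hX.eigenvectorUnitary
    rw [hspec, show W * (U * D * star U) = U * (C * D) * star U by
      rw [hC]
      calc W * (U * D * star U) = (U * star U) * (W * (U * D * star U)) := by
            rw [hU', one_mul]
        _ = U * (star U * W * U * D) * star U := by noncomm_ring]
    rw [show (U * (C * D) * star U).trace = (star U * (U * (C * D))).trace from
      Matrix.trace_mul_comm _ _, ← mul_assoc, hU, one_mul]
    rw [Matrix.trace]
    congr 1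
    funext i
    rw [Matrix.diag_apply, Matrix.mul_apply]
    rw [Finset.sum_eq_single i]
    · intro b _ hb
      rw [show D b i = 0 from Matrix.diagonal_apply_ne _ hb, mul_zero]
    · intro h; exact absurd (Finset.mem_univ i) h
  rw [htr]
  rw [Complex.re_sum]
  refine Finset.sum_le_sum fun i _ => ?_
  have hD : D i i = Complex.ofReal (hX.eigenvalues i) := by simp [D]
  rw [hD]
  have : (C i i * Complex.ofReal (hX.eigenvalues i)).re = (C i i).re * hX.eigenvalues i := by
    simp [Complex.mul_re]
  rw [this]
  calc (C i i).re * hX.eigenvalues i ≤ |(C i i).re * hX.eigenvalues i| := le_abs_self _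
    _ = |(C i i).re| * |hX.eigenvalues i| := abs_mul _ _
    _ ≤ 1 * |hX.eigenvalues i| := by
        exact mul_le_mul_of_nonneg_right (hCd i) (abs_nonneg _)
    _ = |hX.eigenvalues i| := one_mul _

open Matrix in
lemma trace_re_nonneg' {P : Matrix ι ι ℂ} (hP : P.PosSemidef) : 0 ≤ P.trace.re := by
  rw [Matrix.trace, Complex.re_sum]
  exact Finset.sum_nonneg fun i _ =>
    (Complex.nonneg_iff.mp (diag_nonneg' hP i)).1

lemma traceNorm_nonneg (A : Matrix ι ι ℂ) : 0 ≤ traceNorm A :=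
  by rw [traceNorm_def']; exact trace_re_nonneg' (Matrix.nonneg_iff_posSemidef.mp (CFC.sqrt_nonneg _))

open Matrix in
lemma exists_dual (X : Matrix ι ι ℂ) (hX : X.IsHermitian) :
    ∃ W : Matrix ι ι ℂ, (1 - W).PosSemidef ∧ (1 + W).PosSemidef ∧
      (W * X).trace.re = traceNorm X := by
  set U : Matrix ι ι ℂ := (hX.eigenvectorUnitary : Matrix ι ι ℂ)
  have hU : (star U) * U = 1 := Unitary.coe_star_mul_self hX.eigenvectorUnitary
  have hU' : U * (star U) = 1 := Unitary.coe_mul_star_self hX.eigenvectorUnitary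
  set D : Matrix ι ι ℂ := diagonal (Complex.ofReal ∘ hX.eigenvalues)
  have hspec : X = U * D * star U := hX.spectral_theorem
  set s : ι → ℝ := fun i => if 0 ≤ hX.eigenvalues i then 1 else -1 with hs
  refine ⟨U * diagonal (fun i => Complex.ofReal (s i)) * star U, ?_, ?_, ?_⟩
  · have e : (1 : Matrix ι ι ℂ) - U * diagonal (fun i => Complex.ofReal (s i)) * star U
        = U * diagonal (fun i => Complex.ofReal (1 - s i)) * star U := by
      have : (diagonal (fun i => Complex.ofReal (1 - s i)) : Matrix ι ι ℂ)
          = 1 - diagonal (fun i => Complex.ofReal (s i)) := by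
        rw [← Matrix.diagonal_one, Matrix.diagonal_sub]
        congr 1; funext i; simp
      rw [this, mul_sub, mul_one, sub_mul, hU']
    rw [e]
    refine PosSemidef.mul_mul_conjTranspose_same ?_ U
    refine PosSemidef.diagonal fun i => ?_
    show (0:ℂ) ≤ _
    rw [Complex.nonneg_iff]
    constructor
    · simp only [Complex.ofReal_re]
      rw [hs]; dsimp only; split <;> norm_num
    · simp
  · have e : (1 : Matrix ι ι ℂ) + U * diagonal (fun i => Complex.ofReal (s i)) * star U
        = U * diagonal (fun i => Complex.ofReal (1 + s i)) * star U := by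
      have : (diagonal (fun i => Complex.ofReal (1 + s i)) : Matrix ι ι ℂ)
          = 1 + diagonal (fun i => Complex.ofReal (s i)) := by
        rw [← Matrix.diagonal_one, Matrix.diagonal_add]
        congr 1; funext i; simp
      rw [this, mul_add, mul_one, add_mul, hU']
    rw [e]
    refine PosSemidef.mul_mul_conjTranspose_same ?_ U
    refine PosSemidef.diagonal fun i => ?_
    show (0:ℂ) ≤ _
    rw [Complex.nonneg_iff]
    constructor
    · simp only [Complex.ofReal_re]
      rw [hs]; dsimp only; split <;> norm_num
    · simp
  · rw [traceNorm_eq_sum_abs X hX]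
    have e : (U * diagonal (fun i => Complex.ofReal (s i)) * star U) * X
        = U * (diagonal (fun i => Complex.ofReal (s i)) * D) * star U := by
      rw [hspec]
      calc (U * diagonal (fun i => Complex.ofReal (s i)) * star U) * (U * D * star U)
          = U * (diagonal (fun i => Complex.ofReal (s i)) * ((star U * U) * D)) * star U := by
            noncomm_ring
        _ = U * (diagonal (fun i => Complex.ofReal (s i)) * D) * star U := by
            rw [hU, one_mul]
    rw [e]
    rw [show (U * (diagonal (fun i => Complex.ofReal (s i)) * D) * star U).trace
        = (star U * (U * (diagonal (fun i => Complex.ofReal (s i)) * D))).trace from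
        Matrix.trace_mul_comm _ _, ← mul_assoc, hU, one_mul]
    rw [show (diagonal (fun i => Complex.ofReal (s i)) * D : Matrix ι ι ℂ)
        = diagonal (fun i => Complex.ofReal (s i * hX.eigenvalues i)) by
      rw [Matrix.diagonal_mul_diagonal]; congr 1; funext i; simp]
    rw [Matrix.trace_diagonal, Complex.re_sum]
    refine Finset.sum_congr rfl fun i _ => ?_
    simp only [Complex.ofReal_re]
    rw [hs]; dsimp only
    rcases le_or_gt 0 (hX.eigenvalues i) with h | h
    · rw [if_pos h, one_mul, abs_of_nonneg h]
    · rw [if_neg (not_le.mpr h), abs_of_neg h]; ring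

open Matrix in
lemma traceNorm_add_le {A B : Matrix ι ι ℂ} (hA : A.IsHermitian) (hB : B.IsHermitian) :
    traceNorm (A + B) ≤ traceNorm A + traceNorm B := by
  obtain ⟨W, hW1, hW2, hW⟩ := exists_dual (A + B) (hA.add hB)
  rw [← hW, mul_add, Matrix.trace_add, Complex.add_re]
  exact add_le_add (pairing_le A W hA hW1 hW2) (pairing_le B W hB hW1 hW2)

open Matrix in
lemma traceNorm_neg (A : Matrix ι ι ℂ) : traceNorm (-A) = traceNorm A :=
  traceNorm_congr (by simp)

open Matrix in
lemma traceNorm_sub_le {A B : Matrix ι ι ℂ} (hA : A.IsHermitian) (hB : B.IsHermitian) :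
    traceNorm (A - B) ≤ traceNorm A + traceNorm B := by
  rw [sub_eq_add_neg]
  calc traceNorm (A + -B) ≤ traceNorm A + traceNorm (-B) := traceNorm_add_le hA hB.neg
    _ = traceNorm A + traceNorm B := by rw [traceNorm_neg]

open Matrix in
lemma Channel.map_posSemidef (N : Channel ι) {P : Matrix ι ι ℂ} (hP : P.PosSemidef) :
    (N.map P).PosSemidef := by
  have hB := N.cp 1 (P.submatrix Prod.snd Prod.snd) (hP.submatrix Prod.snd)
  have he : N.map P = (idTensorMap 1 N.map (P.submatrix Prod.snd Prod.snd)).submatrix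
      (fun i => ((0 : Fin 1), i)) (fun i => ((0 : Fin 1), i)) := by
    ext i j; rfl
  rw [he]
  exact hB.submatrix _

open Matrix in
lemma trace_conj_diag {U : Matrix ι ι ℂ} (hU : star U * U = 1) (f : ι → ℂ) :
    (U * diagonal f * star U).trace = ∑ i, f i := by
  rw [show (U * diagonal f * star U).trace = (star U * (U * diagonal f)).trace from
    Matrix.trace_mul_comm _ _, ← mul_assoc, hU, one_mul, Matrix.trace_diagonal]

open Matrix in
lemma traceNorm_channel_le (N : Channel ι) {X : Matrix ι ι ℂ} (hX : X.IsHermitian) :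
    traceNorm (N.map X) ≤ traceNorm X := by
  set U : Matrix ι ι ℂ := (hX.eigenvectorUnitary : Matrix ι ι ℂ)
  have hU : (star U) * U = 1 := Unitary.coe_star_mul_self hX.eigenvectorUnitary
  have hspec : X = U * diagonal (Complex.ofReal ∘ hX.eigenvalues) * star U :=
    hX.spectral_theorem
  set P : Matrix ι ι ℂ := U * diagonal (fun i => Complex.ofReal (max (hX.eigenvalues i) 0)) * star U
  set Q : Matrix ι ι ℂ :=
    U * diagonal (fun i => Complex.ofReal (max (-(hX.eigenvalues i)) 0)) * star U
  have hPpsd : P.PosSemidef := by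
    refine PosSemidef.mul_mul_conjTranspose_same ?_ U
    refine PosSemidef.diagonal fun i => ?_
    show (0:ℂ) ≤ _
    rw [Complex.nonneg_iff]
    constructor <;> simp [le_max_right]
  have hQpsd : Q.PosSemidef := by
    refine PosSemidef.mul_mul_conjTranspose_same ?_ U
    refine PosSemidef.diagonal fun i => ?_
    show (0:ℂ) ≤ _
    rw [Complex.nonneg_iff]
    constructor <;> simp [le_max_right]
  have hXPQ : X = P - Q := by
    rw [hspec]
    have hf : (Complex.ofReal ∘ hX.eigenvalues)
        = (fun i => Complex.ofReal (max (hX.eigenvalues i) 0))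
          - (fun i => Complex.ofReal (max (-(hX.eigenvalues i)) 0)) := by
      funext i
      simp only [Function.comp_apply, Pi.sub_apply, ← Complex.ofReal_sub]
      congr 1
      rcases le_or_gt 0 (hX.eigenvalues i) with h | h
      · rw [max_eq_left h, max_eq_right (by linarith), sub_zero]
      · rw [max_eq_right h.le, max_eq_left (by linarith), zero_sub, neg_neg]
    have : (diagonal (Complex.ofReal ∘ hX.eigenvalues) : Matrix ι ι ℂ)
        = diagonal (fun i => Complex.ofReal (max (hX.eigenvalues i) 0))
          - diagonal (fun i => Complex.ofReal (max (-(hX.eigenvalues i)) 0)) := by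
      rw [Matrix.diagonal_sub, hf]
      rfl
    rw [this, mul_sub, sub_mul]
  have hmap : N.map X = N.map P - N.map Q := by rw [hXPQ, map_sub]
  rw [hmap]
  have h1 : traceNorm (N.map P - N.map Q) ≤ traceNorm (N.map P) + traceNorm (N.map Q) :=
    traceNorm_sub_le (N.map_posSemidef hPpsd).1 (N.map_posSemidef hQpsd).1
  have h2 : traceNorm (N.map P) = P.trace.re := by
    rw [traceNorm_psd (N.map_posSemidef hPpsd), N.tp]
  have h3 : traceNorm (N.map Q) = Q.trace.re := by
    rw [traceNorm_psd (N.map_posSemidef hQpsd), N.tp]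
  have h4 : P.trace.re + Q.trace.re = traceNorm X := by
    rw [traceNorm_eq_sum_abs X hX]
    rw [show P.trace = ∑ i, Complex.ofReal (max (hX.eigenvalues i) 0) from trace_conj_diag hU _,
      show Q.trace = ∑ i, Complex.ofReal (max (-(hX.eigenvalues i)) 0) from trace_conj_diag hU _]
    rw [Complex.re_sum, Complex.re_sum, ← Finset.sum_add_distrib]
    refine Finset.sum_congr rfl fun i _ => ?_
    simp only [Complex.ofReal_re]
    rcases le_or_gt 0 (hX.eigenvalues i) with h | h
    · rw [max_eq_left h, max_eq_right (by linarith), add_zero, abs_of_nonneg h]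
    · rw [max_eq_right h.le, max_eq_left (by linarith), zero_add, abs_of_neg h]
  linarith

open Matrix in
theorem stmt13' {d : ℕ} (J : Set (Channel (Fin d)))
    (hJ : ∀ M ∈ J, ∀ ρ ∈ incoherentStates d, M.map ρ ∈ incoherentStates d)
    (hRepl : ∀ σ ∈ incoherentStates d, ∃ M ∈ J,
      ∀ τ : Matrix (Fin d) (Fin d) ℂ, M.map τ = τ.trace • σ)
    (N : Channel (Fin d)) (ρ : Matrix (Fin d) (Fin d) ℂ) (hρ : IsState ρ) :
    psuccChan (⇑N.map) J ρ - psuccFF (⇑N.map) J (incoherentStates d)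
      ≤ (1/2) * omega1 (incoherentStates d) ρ := by
  have hd : 0 < d := by
    by_contra h
    have hd0 : d = 0 := by omega
    subst hd0
    have := hρ.2
    simp [Matrix.trace] at this
  -- a fixed incoherent state
  have hσ₀ : Matrix.diagonal (fun _ : Fin d => ((d : ℝ)⁻¹ : ℂ)) ∈ incoherentStates d := by
    refine ⟨⟨?_, ?_⟩, Matrix.isDiag_diagonal _⟩
    · refine Matrix.PosSemidef.diagonal fun i => ?_
      show (0:ℂ) ≤ _
      rw [show (((d : ℝ))⁻¹ : ℂ) = Complex.ofReal ((d:ℝ)⁻¹) by push_cast; ring]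
      rw [Complex.nonneg_iff]
      constructor
      · simp only [Complex.ofReal_re]; positivity
      · exact (Complex.ofReal_im _).symm
    · rw [Matrix.trace_diagonal]
      rw [Finset.sum_const, Finset.card_univ, Fintype.card_fin]
      rw [nsmul_eq_mul]
      push_cast
      exact mul_inv_cancel₀ (by exact_mod_cast hd.ne' : (d:ℂ) ≠ 0)
  set σ₀ : Matrix (Fin d) (Fin d) ℂ := Matrix.diagonal (fun _ : Fin d => ((d : ℝ)⁻¹ : ℂ))
  obtain ⟨R₀, hR₀J, hR₀⟩ := hRepl σ₀ hσ₀
  -- basic facts about states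
  have state_tn : ∀ τ : Matrix (Fin d) (Fin d) ℂ, IsState τ → traceNorm τ = 1 := by
    intro τ hτ
    rw [traceNorm_psd hτ.1, hτ.2, Complex.one_re]
  -- psuccPair is at least 1/2 and for states at most 1
  have pair_ge : ∀ (M : Matrix (Fin d) (Fin d) ℂ → Matrix (Fin d) (Fin d) ℂ)
      (τ : Matrix (Fin d) (Fin d) ℂ), 1/2 ≤ psuccPair (⇑N.map) M τ := by
    intro M τ
    have := traceNorm_nonneg (N.map τ - M τ)
    rw [psuccPair]
    linarith
  have bddT : ∀ τ : Matrix (Fin d) (Fin d) ℂ,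
      BddBelow ((fun M : Channel (Fin d) => psuccPair (⇑N.map) (⇑M.map) τ) '' J) := by
    intro τ
    exact ⟨1/2, by rintro x ⟨M, hM, rfl⟩; exact pair_ge _ _⟩
  have neT : ∀ τ : Matrix (Fin d) (Fin d) ℂ,
      ((fun M : Channel (Fin d) => psuccPair (⇑N.map) (⇑M.map) τ) '' J).Nonempty :=
    fun τ => ⟨_, ⟨R₀, hR₀J, rfl⟩⟩
  -- every incoherent probe gives success probability at most 1
  have chan_le_one : ∀ σ ∈ incoherentStates d, psuccChan (⇑N.map) J σ ≤ 1 := by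
    intro σ hσ
    have h1 : psuccChan (⇑N.map) J σ ≤ psuccPair (⇑N.map) (⇑R₀.map) σ :=
      csInf_le (bddT σ) ⟨R₀, hR₀J, rfl⟩
    have h2 : R₀.map σ = σ₀ := by rw [hR₀, hσ.1.2, one_smul]
    have hNσ : (N.map σ).PosSemidef := N.map_posSemidef hσ.1.1
    have htn : traceNorm (N.map σ - σ₀) ≤ 2 := by
      have := traceNorm_sub_le hNσ.1 hσ₀.1.1.1
      have e1 : traceNorm (N.map σ) = 1 := by
        rw [traceNorm_psd hNσ, N.tp, hσ.1.2, Complex.one_re]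
      have e2 : traceNorm σ₀ = 1 := state_tn _ hσ₀.1
      linarith
    rw [psuccPair, h2] at h1
    linarith
  have bddS : BddAbove ((fun τ => psuccChan (⇑N.map) J τ) '' (incoherentStates d)) :=
    ⟨1, by rintro x ⟨σ, hσ, rfl⟩; exact chan_le_one σ hσ⟩
  -- key step: for every incoherent σ,
  -- psuccChan ρ ≤ psuccChan σ + (1/4) ‖ρ - σ‖₁
  have key : ∀ σ ∈ incoherentStates d,
      psuccChan (⇑N.map) J ρ ≤ psuccChan (⇑N.map) J σ + (1/4) * traceNorm (ρ - σ) := by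
    intro σ hσ
    have : psuccChan (⇑N.map) J ρ - (1/4) * traceNorm (ρ - σ) ≤ psuccChan (⇑N.map) J σ := by
      refine le_csInf (neT σ) ?_
      rintro x ⟨M, hM, rfl⟩
      have hσ' := hJ M hM σ hσ
      obtain ⟨R, hRJ, hR⟩ := hRepl (M.map σ) hσ'
      have h1 : psuccChan (⇑N.map) J ρ ≤ psuccPair (⇑N.map) (⇑R.map) ρ :=
        csInf_le (bddT ρ) ⟨R, hRJ, rfl⟩
      have h2 : R.map ρ = M.map σ := by rw [hR, hρ.2, one_smul]
      have hNρ : (N.map ρ).PosSemidef := N.map_posSemidef hρ.1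
      have hNσ : (N.map σ).PosSemidef := N.map_posSemidef hσ.1.1
      have hMσ : (M.map σ).PosSemidef := hσ'.1.1
      have htri : traceNorm (N.map ρ - M.map σ)
          ≤ traceNorm (N.map ρ - N.map σ) + traceNorm (N.map σ - M.map σ) := by
        have := traceNorm_add_le (A := N.map ρ - N.map σ) (B := N.map σ - M.map σ)
          (hNρ.1.sub hNσ.1) (hNσ.1.sub hMσ.1)
        rwa [sub_add_sub_cancel] at this
      have hcontr : traceNorm (N.map ρ - N.map σ) ≤ traceNorm (ρ - σ) := by
        rw [← map_sub]
        exact traceNorm_channel_le N (hρ.1.1.sub hσ.1.1.1)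
      rw [psuccPair, h2] at h1
      show _ ≤ psuccPair (⇑N.map) (⇑M.map) σ
      rw [psuccPair]
      linarith
    linarith
  -- psuccChan σ ≤ psuccFF for incoherent σ
  have chan_le_FF : ∀ σ ∈ incoherentStates d,
      psuccChan (⇑N.map) J σ ≤ psuccFF (⇑N.map) J (incoherentStates d) := by
    intro σ hσ
    exact le_csSup bddS ⟨σ, hσ, rfl⟩
  -- conclude
  have key2 : ∀ x ∈ ((fun σ => traceNorm (ρ - σ)) '' (incoherentStates d)),
      4 * (psuccChan (⇑N.map) J ρ - psuccFF (⇑N.map) J (incoherentStates d)) ≤ x := by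
    rintro x ⟨σ, hσ, rfl⟩
    have := key σ hσ
    have := chan_le_FF σ hσ
    linarith
  have hInf : 4 * (psuccChan (⇑N.map) J ρ - psuccFF (⇑N.map) J (incoherentStates d))
      ≤ sInf ((fun σ => traceNorm (ρ - σ)) '' (incoherentStates d)) :=
    le_csInf ⟨_, ⟨σ₀, hσ₀, rfl⟩⟩ key2
  rw [omega1]
  linarith

/-- the advantage of a probe state `ρ` over incoherent probe states in
discriminating `N` from incoherence-preserving channels is bounded by `C₁(ρ)/2`. -/
theorem stmt13 {d : ℕ} (J : Set (Channel (Fin d)))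
    (hJ : ∀ M ∈ J, ∀ ρ ∈ incoherentStates d, M.map ρ ∈ incoherentStates d)
    (hRepl : ∀ σ ∈ incoherentStates d, ∃ M ∈ J,
      ∀ τ : Matrix (Fin d) (Fin d) ℂ, M.map τ = τ.trace • σ)
    (N : Channel (Fin d)) (ρ : Matrix (Fin d) (Fin d) ℂ) (hρ : IsState ρ) :
    psuccChan (⇑N.map) J ρ - psuccFF (⇑N.map) J (incoherentStates d)
      ≤ (1/2) * omega1 (incoherentStates d) ρ :=
  stmt13' J hJ hRepl N ρ hρ
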